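/- arXiv:2107.02877 — 9 statements merged into one kernel-verified Lean document; each statement's English description precedes it below -/
import Mathlib

section
/- Let α₁, α₂ ∈ (0,1], let 0 < β ≤ γ, fix ε ∈ (0,1), and let T > 0 satisfy G(T)·(1+ε)·γ ≤ ε, where G(t) = max(t^{α₁}/Γ(α₁+1), t^{α₂}/Γ(α₂+1)). Fix x₀, y₀ > 0 and let Q = [x₀, x₀+ε·y₀] × [(1-ε)·y₀, (1+ε)·y₀]. If x, y : [0,T] → ℝ are continuous with (x(t), y(t)) ∈ Q for all t ∈ [0,T], then the functions x̃(t) = x₀ + ∫₀ᵗ f(x(s),y(s))·(t-s)^{α₁-1}/Γ(α₁) ds and ỹ(t) = y₀ − ∫₀ᵗ f(x(s),y(s))·(t-s)^{α₂-1}/Γ(α₂) ds also satisfy (x̃(t), ỹ(t)) ∈ Q for all t ∈ [0,T]. -/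
lemma aux_frac_bound (α M t : ℝ) (hα0 : 0 < α) (ht : 0 ≤ t) (g : ℝ → ℝ)
    (hgc : ContinuousOn g (Set.Icc 0 t))
    (hg0 : ∀ s ∈ Set.Icc 0 t, 0 ≤ g s) (hgM : ∀ s ∈ Set.Icc 0 t, g s ≤ M) :
    0 ≤ (∫ s in (0:ℝ)..t, g s * (t - s) ^ (α - 1) / Real.Gamma α) ∧
    (∫ s in (0:ℝ)..t, g s * (t - s) ^ (α - 1) / Real.Gamma α)
      ≤ M * t ^ α / Real.Gamma (α + 1) := by
  have hΓ : 0 < Real.Gamma α := Real.Gamma_pos_of_pos hα0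
  have hr : (-1:ℝ) < α - 1 := by linarith
  have hint0 : IntervalIntegrable (fun s => (t - s) ^ (α - 1)) MeasureTheory.volume 0 t := by
    have := ((intervalIntegral.intervalIntegrable_rpow' hr (a := 0) (b := t)).comp_sub_left t).symm
    simpa using this
  have huIcc : Set.uIcc (0:ℝ) t = Set.Icc 0 t := Set.uIcc_of_le ht
  have hintg : IntervalIntegrable
      (fun s => g s * (t - s) ^ (α - 1) / Real.Gamma α) MeasureTheory.volume 0 t := by
    apply IntervalIntegrable.div_const
    exact hint0.continuousOn_mul (huIcc ▸ hgc)
  have hintM : IntervalIntegrable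
      (fun s => M * (t - s) ^ (α - 1) / Real.Gamma α) MeasureTheory.volume 0 t :=
    (hint0.const_mul M).div_const _
  constructor
  · apply intervalIntegral.integral_nonneg ht
    intro s hs
    exact div_nonneg (mul_nonneg (hg0 s hs)
      (Real.rpow_nonneg (by linarith [hs.2]) _)) hΓ.le
  · have hmono := intervalIntegral.integral_mono_on ht hintg hintM (fun s hs => by
      have hp : (0:ℝ) ≤ (t - s) ^ (α - 1) := Real.rpow_nonneg (by linarith [hs.2]) _
      exact div_le_div_of_nonneg_right
        (mul_le_mul_of_nonneg_right (hgM s hs) hp) hΓ.le)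
    have hcomp : (∫ s in (0:ℝ)..t, (t - s) ^ (α - 1)) = t ^ α / α := by
      rw [show (fun s => (t - s) ^ (α - 1)) = (fun s => (fun u => u ^ (α - 1)) (t - s)) from rfl,
        intervalIntegral.integral_comp_sub_left (fun u => u ^ (α - 1)) t]
      simp only [sub_zero, sub_self]
      rw [integral_rpow (Or.inl hr)]
      rw [Real.zero_rpow (by linarith : α - 1 + 1 ≠ 0)]
      rw [show α - 1 + 1 = α by ring]
      ring
    have hval : (∫ s in (0:ℝ)..t, M * (t - s) ^ (α - 1) / Real.Gamma α)
        = M * t ^ α / Real.Gamma (α + 1) := by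
      simp only [mul_div_assoc]
      rw [intervalIntegral.integral_const_mul]
      rw [intervalIntegral.integral_div, hcomp, Real.Gamma_add_one hα0.ne']
      field_simp
      try ring
    calc (∫ s in (0:ℝ)..t, g s * (t - s) ^ (α - 1) / Real.Gamma α)
        ≤ ∫ s in (0:ℝ)..t, M * (t - s) ^ (α - 1) / Real.Gamma α := hmono
      _ = M * t ^ α / Real.Gamma (α + 1) := hval

theorem stmt3 (α₁ α₂ β γ ε T x₀ y₀ : ℝ)
    (hα₁ : α₁ ∈ Set.Ioc (0:ℝ) 1) (hα₂ : α₂ ∈ Set.Ioc (0:ℝ) 1)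
    (hβ : 0 < β) (hβγ : β ≤ γ) (hε : ε ∈ Set.Ioo (0:ℝ) 1) (hT : 0 < T)
    (G : ℝ → ℝ)
    (hG : ∀ t : ℝ, G t = max (t ^ α₁ / Real.Gamma (α₁ + 1)) (t ^ α₂ / Real.Gamma (α₂ + 1)))
    (hTcond : G T * (1 + ε) * γ ≤ ε)
    (hx₀ : 0 < x₀) (hy₀ : 0 < y₀)
    (f : ℝ → ℝ → ℝ) (hf : ∀ x y : ℝ, f x y = (γ - β * x / (x + y)) * y)
    (x y : ℝ → ℝ)
    (hxc : ContinuousOn x (Set.Icc 0 T)) (hyc : ContinuousOn y (Set.Icc 0 T))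
    (hQ : ∀ t ∈ Set.Icc (0:ℝ) T,
      x t ∈ Set.Icc x₀ (x₀ + ε * y₀) ∧ y t ∈ Set.Icc ((1 - ε) * y₀) ((1 + ε) * y₀)) :
    ∀ t ∈ Set.Icc (0:ℝ) T,
      (x₀ + ∫ s in (0:ℝ)..t, f (x s) (y s) * (t - s) ^ (α₁ - 1) / Real.Gamma α₁)
        ∈ Set.Icc x₀ (x₀ + ε * y₀) ∧
      (y₀ - ∫ s in (0:ℝ)..t, f (x s) (y s) * (t - s) ^ (α₂ - 1) / Real.Gamma α₂)
        ∈ Set.Icc ((1 - ε) * y₀) ((1 + ε) * y₀) := by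
  obtain ⟨hε0, hε1⟩ := hε
  intro t ht
  obtain ⟨ht0, htT⟩ := ht
  have hsub : Set.Icc (0:ℝ) t ⊆ Set.Icc 0 T := Set.Icc_subset_Icc le_rfl htT
  set M := γ * ((1 + ε) * y₀) with hM
  have hsumpos : ∀ s ∈ Set.Icc (0:ℝ) T, 0 < x s + y s := by
    intro s hs
    obtain ⟨hxs, hys⟩ := hQ s hs
    have h1 : x₀ ≤ x s := hxs.1
    have h2 : (1 - ε) * y₀ ≤ y s := hys.1
    nlinarith
  have hgc : ContinuousOn (fun s => f (x s) (y s)) (Set.Icc 0 T) := by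
    have heq : (fun s => f (x s) (y s))
        = fun s => (γ - β * x s / (x s + y s)) * y s := by
      funext s; rw [hf]
    rw [heq]
    exact ((continuousOn_const.sub ((continuousOn_const.mul hxc).div (hxc.add hyc)
      (fun s hs => (hsumpos s hs).ne'))).mul hyc)
  have hg0M : ∀ s ∈ Set.Icc (0:ℝ) T, 0 ≤ f (x s) (y s) ∧ f (x s) (y s) ≤ M := by
    intro s hs
    obtain ⟨hxs, hys⟩ := hQ s hs
    have hxp : 0 < x s := lt_of_lt_of_le hx₀ hxs.1
    have hyp : 0 < y s := lt_of_lt_of_le (by nlinarith) hys.1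
    have hsum : 0 < x s + y s := by linarith
    rw [hf]
    have hr0 : 0 ≤ β * x s / (x s + y s) := by positivity
    have hrβ : β * x s / (x s + y s) ≤ β := by
      rw [div_le_iff₀ hsum]; nlinarith
    constructor
    · apply mul_nonneg _ hyp.le
      linarith
    · rw [hM]
      apply mul_le_mul (by linarith) hys.2 hyp.le (by linarith)
  have hgc' : ContinuousOn (fun s => f (x s) (y s)) (Set.Icc 0 t) := hgc.mono hsub
  have hg0 : ∀ s ∈ Set.Icc (0:ℝ) t, 0 ≤ f (x s) (y s) :=
    fun s hs => (hg0M s (hsub hs)).1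
  have hgM : ∀ s ∈ Set.Icc (0:ℝ) t, f (x s) (y s) ≤ M :=
    fun s hs => (hg0M s (hsub hs)).2
  have hMnn : 0 ≤ M := by
    have hγ : 0 < γ := lt_of_lt_of_le hβ hβγ
    rw [hM]; positivity
  -- the key bound: for each α, M * t^α / Γ(α+1) ≤ ε * y₀
  have hfinal : ∀ α : ℝ, α ∈ Set.Ioc (0:ℝ) 1 →
      (T ^ α / Real.Gamma (α + 1) ≤ G T) → M * t ^ α / Real.Gamma (α + 1) ≤ ε * y₀ := by
    intro α hα hle
    have hΓ : 0 < Real.Gamma (α + 1) := Real.Gamma_pos_of_pos (by linarith [hα.1])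
    have htα : t ^ α ≤ T ^ α := Real.rpow_le_rpow ht0 htT hα.1.le
    have h1 : M * t ^ α / Real.Gamma (α + 1) ≤ M * (T ^ α / Real.Gamma (α + 1)) := by
      rw [mul_div_assoc]
      apply mul_le_mul_of_nonneg_left _ hMnn
      exact div_le_div_of_nonneg_right htα hΓ.le
    have h2 : M * (T ^ α / Real.Gamma (α + 1)) ≤ M * G T :=
      mul_le_mul_of_nonneg_left hle hMnn
    have h3 : M * G T ≤ ε * y₀ := by
      have := mul_le_mul_of_nonneg_right hTcond hy₀.le
      rw [hM]; nlinarith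
    linarith
  have hle1 : T ^ α₁ / Real.Gamma (α₁ + 1) ≤ G T := by
    rw [hG]; exact le_max_left _ _
  have hle2 : T ^ α₂ / Real.Gamma (α₂ + 1) ≤ G T := by
    rw [hG]; exact le_max_right _ _
  obtain ⟨hI1nn, hI1ub⟩ := aux_frac_bound α₁ M t hα₁.1 ht0 _ hgc' hg0 hgM
  obtain ⟨hI2nn, hI2ub⟩ := aux_frac_bound α₂ M t hα₂.1 ht0 _ hgc' hg0 hgM
  have hI1 : (∫ s in (0:ℝ)..t, f (x s) (y s) * (t - s) ^ (α₁ - 1) / Real.Gamma α₁) ≤ ε * y₀ :=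
    le_trans hI1ub (hfinal α₁ hα₁ hle1)
  have hI2 : (∫ s in (0:ℝ)..t, f (x s) (y s) * (t - s) ^ (α₂ - 1) / Real.Gamma α₂) ≤ ε * y₀ :=
    le_trans hI2ub (hfinal α₂ hα₂ hle2)
  constructor
  · constructor <;> linarith
  · constructor <;> nlinarith
end

section
/- Let α₁, α₂ ∈ (0,1] and β > γ > 0. Fix x₀, y₀ > 0, set ε = min(1/2, x₀/(2y₀)), and let T > 0 satisfy G(T)·(β+γ)·(1+ε) ≤ ε, where G(t) = max(t^{α₁}/Γ(α₁+1), t^{α₂}/Γ(α₂+1)). Let Q = [x₀−ε·y₀, x₀+ε·y₀] × [(1-ε)·y₀, (1+ε)·y₀]. If x, y : [0,T] → ℝ are continuous with (x(t),y(t)) ∈ Q for all t ∈ [0,T], then x̃(t) = x₀ + ∫₀ᵗ f(x(s),y(s))·(t-s)^{α₁-1}/Γ(α₁) ds and ỹ(t) = y₀ − ∫₀ᵗ f(x(s),y(s))·(t-s)^{α₂-1}/Γ(α₂) ds satisfy (x̃(t),ỹ(t)) ∈ Q for all t ∈ [0,T]. -/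
open intervalIntegral MeasureTheory

lemma aux_bound (α T t M : ℝ) (hα : α ∈ Set.Ioc (0:ℝ) 1) (ht : t ∈ Set.Icc 0 T)
    (hM : 0 ≤ M) (F : ℝ → ℝ) (hF : ∀ s ∈ Set.Ioc (0:ℝ) t, |F s| ≤ M) :
    |∫ s in (0:ℝ)..t, F s * (t - s) ^ (α - 1) / Real.Gamma α| ≤ M * T ^ α / Real.Gamma (α + 1) := by
  obtain ⟨hα0, hα1⟩ := hα
  have hΓ : 0 < Real.Gamma α := Real.Gamma_pos_of_pos hα0
  have hΓ1 : Real.Gamma (α + 1) = α * Real.Gamma α := Real.Gamma_add_one hα0.ne'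
  have hΓ1pos : 0 < Real.Gamma (α + 1) := by rw [hΓ1]; positivity
  have ht0 : 0 ≤ t := ht.1
  have hr : (-1:ℝ) < α - 1 := by linarith
  have h1 : IntervalIntegrable (fun u : ℝ => u ^ (α - 1)) volume 0 t :=
    intervalIntegral.intervalIntegrable_rpow' hr
  have h2 : IntervalIntegrable (fun s : ℝ => (t - s) ^ (α - 1)) volume 0 t := by
    have := (h1.comp_sub_left t).symm
    simpa using this
  have h3 : IntervalIntegrable (fun s : ℝ => M * (t - s) ^ (α - 1) / Real.Gamma α) volume 0 t :=
    (h2.const_mul M).div_const _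
  have hval : (∫ s in (0:ℝ)..t, M * (t - s) ^ (α - 1) / Real.Gamma α)
      = M * t ^ α / Real.Gamma (α + 1) := by
    have hc : (∫ s in (0:ℝ)..t, (t - s) ^ (α - 1)) = t ^ α / α := by
      rw [intervalIntegral.integral_comp_sub_left (fun u : ℝ => u ^ (α - 1)) t]
      simp only [sub_self, sub_zero]
      rw [integral_rpow (Or.inl hr)]
      rw [Real.zero_rpow (by linarith : α - 1 + 1 ≠ 0)]
      ring_nf
    have : (∫ s in (0:ℝ)..t, M * (t - s) ^ (α - 1) / Real.Gamma α)
        = (M / Real.Gamma α) * ∫ s in (0:ℝ)..t, (t - s) ^ (α - 1) := by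
      rw [← intervalIntegral.integral_const_mul]
      congr 1 with s; ring
    rw [this, hc, hΓ1, div_mul_div_comm, mul_comm (Real.Gamma α) α]
  have hbound : ∀ᵐ s ∂(volume.restrict (Set.uIoc (0:ℝ) t)),
      ‖F s * (t - s) ^ (α - 1) / Real.Gamma α‖ ≤ M * (t - s) ^ (α - 1) / Real.Gamma α := by
    rw [MeasureTheory.ae_restrict_iff' measurableSet_uIoc]
    refine Filter.Eventually.of_forall (fun s hs => ?_)
    rw [Set.uIoc_of_le ht0] at hs
    have hts : 0 ≤ t - s := by linarith [hs.2]
    have hrp : (0:ℝ) ≤ (t - s) ^ (α - 1) := Real.rpow_nonneg hts _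
    have hFs := hF s hs
    rw [Real.norm_eq_abs, abs_div, abs_mul, abs_of_nonneg hrp, abs_of_pos hΓ]
    gcongr
  have := intervalIntegral.norm_integral_le_abs_of_norm_le hbound h3
  rw [Real.norm_eq_abs, hval] at this
  have habs : |M * t ^ α / Real.Gamma (α + 1)| = M * t ^ α / Real.Gamma (α + 1) := by
    have : (0:ℝ) ≤ M * t ^ α / Real.Gamma (α + 1) := by positivity
    exact abs_of_nonneg this
  rw [habs] at this
  refine this.trans ?_
  gcongr
  exact ht.2



set_option maxHeartbeats 1000000

theorem stmt4 (α₁ α₂ β γ T x₀ y₀ : ℝ)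
    (hα₁ : α₁ ∈ Set.Ioc (0:ℝ) 1) (hα₂ : α₂ ∈ Set.Ioc (0:ℝ) 1)
    (hγ : 0 < γ) (hβγ : γ < β)
    (hx₀ : 0 < x₀) (hy₀ : 0 < y₀) (hT : 0 < T)
    (ε : ℝ) (hε : ε = min (1/2) (x₀ / (2 * y₀)))
    (G : ℝ → ℝ)
    (hG : ∀ t : ℝ, G t = max (t ^ α₁ / Real.Gamma (α₁ + 1)) (t ^ α₂ / Real.Gamma (α₂ + 1)))
    (hTcond : G T * (β + γ) * (1 + ε) ≤ ε)
    (f : ℝ → ℝ → ℝ) (hf : ∀ x y : ℝ, f x y = (γ - β * x / (x + y)) * y)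
    (x y : ℝ → ℝ)
    (hxc : ContinuousOn x (Set.Icc 0 T)) (hyc : ContinuousOn y (Set.Icc 0 T))
    (hQ : ∀ t ∈ Set.Icc (0:ℝ) T,
      x t ∈ Set.Icc (x₀ - ε * y₀) (x₀ + ε * y₀) ∧
      y t ∈ Set.Icc ((1 - ε) * y₀) ((1 + ε) * y₀)) :
    ∀ t ∈ Set.Icc (0:ℝ) T,
      (x₀ + ∫ s in (0:ℝ)..t, f (x s) (y s) * (t - s) ^ (α₁ - 1) / Real.Gamma α₁)
        ∈ Set.Icc (x₀ - ε * y₀) (x₀ + ε * y₀) ∧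
      (y₀ - ∫ s in (0:ℝ)..t, f (x s) (y s) * (t - s) ^ (α₂ - 1) / Real.Gamma α₂)
        ∈ Set.Icc ((1 - ε) * y₀) ((1 + ε) * y₀) := by
  intro t ht
  obtain ⟨ht0, htT⟩ := ht
  have hy₀' : (0:ℝ) < 2 * y₀ := by linarith
  have hε0 : 0 < ε := by
    rw [hε]; exact lt_min (by norm_num) (div_pos hx₀ hy₀')
  have hεhalf : ε ≤ 1/2 := hε ▸ min_le_left _ _
  have hεx : ε * y₀ ≤ x₀ / 2 := by
    have h := hε ▸ min_le_right (1/2 : ℝ) (x₀ / (2 * y₀))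
    have heq : x₀ / (2 * y₀) * y₀ = x₀ / 2 := by field_simp
    nlinarith [mul_le_mul_of_nonneg_right h hy₀.le]
  set M : ℝ := (β + γ) * ((1 + ε) * y₀) with hM
  have hMpos : 0 ≤ M := by
    rw [hM]
    have h1 : (0:ℝ) < β + γ := by linarith
    have h2 : (0:ℝ) < (1 + ε) * y₀ := by nlinarith
    positivity
  have hFbound : ∀ s ∈ Set.Ioc (0:ℝ) t, |f (x s) (y s)| ≤ M := by
    intro s hs
    have hsT : s ∈ Set.Icc (0:ℝ) T := ⟨hs.1.le, hs.2.trans htT⟩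
    obtain ⟨⟨hx1, hx2⟩, ⟨hy1, hy2⟩⟩ := hQ s hsT
    have hxs : 0 < x s := by nlinarith
    have hys : 0 < y s := by nlinarith
    have hsum : 0 < x s + y s := by linarith
    have hr0 : 0 ≤ x s / (x s + y s) := by positivity
    have hr1 : x s / (x s + y s) ≤ 1 := by
      rw [div_le_one hsum]; linarith
    have habs : |γ - β * x s / (x s + y s)| ≤ β + γ := by
      rw [abs_le]
      constructor
      · have : β * x s / (x s + y s) = β * (x s / (x s + y s)) := by ring
        rw [this]; nlinarith
      · have : β * x s / (x s + y s) = β * (x s / (x s + y s)) := by ring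
        rw [this]; nlinarith
    rw [hf, abs_mul, abs_of_pos hys, hM]
    have : |γ - β * x s / (x s + y s)| * y s ≤ (β + γ) * ((1 + ε) * y₀) := by
      apply mul_le_mul habs hy2 hys.le (by linarith)
    exact this
  have hGT : T ^ α₁ / Real.Gamma (α₁ + 1) ≤ G T := hG T ▸ le_max_left _ _
  have hGT2 : T ^ α₂ / Real.Gamma (α₂ + 1) ≤ G T := hG T ▸ le_max_right _ _
  have hMG : ∀ GB : ℝ, GB ≤ G T → M * GB ≤ ε * y₀ := by
    intro GB hGB
    have : M * GB ≤ M * G T := by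
      apply mul_le_mul_of_nonneg_left hGB hMpos
    refine this.trans ?_
    calc M * G T = (G T * (β + γ) * (1 + ε)) * y₀ := by rw [hM]; ring
      _ ≤ ε * y₀ := by nlinarith
  have hb1 := aux_bound α₁ T t M hα₁ ⟨ht0, htT⟩ hMpos (fun s => f (x s) (y s)) hFbound
  have hb2 := aux_bound α₂ T t M hα₂ ⟨ht0, htT⟩ hMpos (fun s => f (x s) (y s)) hFbound
  have hb1' : |∫ s in (0:ℝ)..t, f (x s) (y s) * (t - s) ^ (α₁ - 1) / Real.Gamma α₁| ≤ ε * y₀ := by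
    refine hb1.trans ?_
    have : M * T ^ α₁ / Real.Gamma (α₁ + 1) = M * (T ^ α₁ / Real.Gamma (α₁ + 1)) := by ring
    rw [this]; exact hMG _ hGT
  have hb2' : |∫ s in (0:ℝ)..t, f (x s) (y s) * (t - s) ^ (α₂ - 1) / Real.Gamma α₂| ≤ ε * y₀ := by
    refine hb2.trans ?_
    have : M * T ^ α₂ / Real.Gamma (α₂ + 1) = M * (T ^ α₂ / Real.Gamma (α₂ + 1)) := by ring
    rw [this]; exact hMG _ hGT2
  rw [abs_le] at hb1' hb2'
  refine ⟨⟨by linarith [hb1'.1], by linarith [hb1'.2]⟩, ⟨by nlinarith [hb2'.2], by nlinarith [hb2'.1]⟩⟩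
end

section
/- If u : [a,b] → ℝ is continuously differentiable and α ∈ [0,1), then the Caputo–Fabrizio operator D^α u(t) = (M(α)/(1-α)) ∫ₐᵗ u'(τ)·exp(−(α/(1-α))·(t−τ)) dτ is differentiable in t on (a,b) and satisfies d/dt D^α u(t) = (M(α)/(1-α))·u'(t) − (α/(1-α))·D^α u(t). -/
theorem stmt5 (M : ℝ → ℝ) (hM : ∀ α ∈ Set.Icc (0:ℝ) 1, 0 ≤ M α)
    (a b : ℝ) (hab : a < b) (α : ℝ) (hα : α ∈ Set.Ico (0:ℝ) 1)
    (u u' : ℝ → ℝ) (hu : ∀ t ∈ Set.Icc a b, HasDerivAt u (u' t) t)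
    (hu' : ContinuousOn u' (Set.Icc a b))
    (D : ℝ → ℝ)
    (hD : ∀ t : ℝ, D t = M α / (1 - α) *
      ∫ τ in a..t, u' τ * Real.exp (-(α / (1 - α)) * (t - τ))) :
    ∀ t ∈ Set.Ioo a b,
      HasDerivAt D (M α / (1 - α) * u' t - α / (1 - α) * D t) t := by
  intro t ht
  set k : ℝ := α / (1 - α) with hk
  set c : ℝ := M α / (1 - α) with hc
  have hg : ContinuousOn (fun τ => u' τ * Real.exp (k * τ)) (Set.Icc a b) :=
    hu'.mul (Continuous.continuousOn (by continuity))
  set F : ℝ → ℝ := fun s => ∫ τ in a..s, u' τ * Real.exp (k * τ) with hF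
  have hmem : Set.Icc a b ∈ nhds t := Icc_mem_nhds ht.1 ht.2
  have hca : ContinuousAt (fun τ => u' τ * Real.exp (k * τ)) t :=
    hg.continuousAt hmem
  have hFt : HasDerivAt F (u' t * Real.exp (k * t)) t := by
    apply intervalIntegral.integral_hasDerivAt_right
    · apply ContinuousOn.intervalIntegrable
      apply hg.mono
      rw [Set.uIcc_of_le (le_of_lt ht.1)]
      exact Set.Icc_subset_Icc le_rfl (le_of_lt ht.2)
    · exact ContinuousOn.stronglyMeasurableAtFilter isOpen_Ioo
        (hg.mono Set.Ioo_subset_Icc_self) t ht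
    · exact hca
  have hDeq : D = fun s => c * (Real.exp (-(k * s)) * F s) := by
    funext s
    rw [hD s]
    congr 1
    rw [← intervalIntegral.integral_const_mul]
    apply intervalIntegral.integral_congr
    intro τ _
    simp only
    rw [show Real.exp (-(k * s)) * (u' τ * Real.exp (k * τ)) =
      u' τ * (Real.exp (-(k * s)) * Real.exp (k * τ)) by ring, ← Real.exp_add]
    have : -(k * s) + k * τ = -k * (s - τ) := by ring
    rw [this]
  have hexp : HasDerivAt (fun s => Real.exp (-(k * s))) (Real.exp (-(k * t)) * (-k)) t := by
    have h1 : HasDerivAt (fun s : ℝ => -(k * s)) (-k) t := by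
      simpa using ((hasDerivAt_id t).const_mul (-k))
    simpa using h1.exp
  have h := (hexp.mul hFt).const_mul c
  rw [hDeq]
  refine HasDerivAt.congr_deriv h (Eq.symm ?_)
  have hEE : Real.exp (-(k * t)) * Real.exp (k * t) = 1 := by
    rw [← Real.exp_add]; simp
  linear_combination (-(c * u' t)) * hEE
end

section
/- Let α ∈ [0,1), β, γ > 0, M(α) > 0, and P > 0. Define B = (α + M(α) + (1-α)(β-γ))/2 and C = M(α)·(α − (1-α)·γ). Then for all x ∈ ℝ, the quantity (B·x − P/2)² − C·x² + M(α)·P·x is nonnegative; indeed it equals (B² − C)·x² − (B − M(α))·P·x + P²/4, a quadratic in x whose discriminant equals −(1-α)·β·M(α)·P² < 0. -/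
theorem stmt6 (α β γ Mα P : ℝ) (hα : α ∈ Set.Ico (0:ℝ) 1)
    (hβ : 0 < β) (hγ : 0 < γ) (hM : 0 < Mα) (hP : 0 < P)
    (B C : ℝ) (hB : B = (α + Mα + (1 - α) * (β - γ)) / 2)
    (hC : C = Mα * (α - (1 - α) * γ)) :
    (∀ x : ℝ,
      (B * x - P / 2) ^ 2 - C * x ^ 2 + Mα * P * x =
        (B ^ 2 - C) * x ^ 2 - (B - Mα) * P * x + P ^ 2 / 4 ∧
      0 ≤ (B * x - P / 2) ^ 2 - C * x ^ 2 + Mα * P * x) ∧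
    ((B - Mα) * P) ^ 2 - 4 * (B ^ 2 - C) * (P ^ 2 / 4) = -(1 - α) * β * Mα * P ^ 2 ∧
    -(1 - α) * β * Mα * P ^ 2 < 0 := by
  obtain ⟨hα0, hα1⟩ := hα
  have hα' : 0 < 1 - α := by linarith
  have h1 : 0 < (1 - α) * β * Mα * P ^ 2 := by positivity
  have hkey : B ^ 2 - C - (B - Mα) ^ 2 = (1 - α) * β * Mα := by
    rw [hB, hC]; ring
  have hA : 0 < B ^ 2 - C := by nlinarith [sq_nonneg (B - Mα)]
  refine ⟨fun x => ⟨by ring, ?_⟩, by rw [hB, hC]; ring, by linarith⟩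
  nlinarith [sq_nonneg (2 * (B ^ 2 - C) * x - (B - Mα) * P), hA, h1, mul_pos hA h1]
end

section
/- Let α ∈ [0,1), β, γ > 0 with γ < α/(1-α), M(α) ≥ α, M(α) > 0, and P > 0. The equilibria of the scalar ODE x' = (β − γ − β·x/(g(x)+x))·x, i.e. the zeros of its right-hand side among nonnegative x with g(x)+x > 0, are exactly x = 0 and x = E := (β−γ)·P / (α·(β−γ) + M(α)·γ), and E > 0 if and only if β/γ > 1. -/
set_option maxHeartbeats 1000000 in
theorem stmt10 (α β γ Mα P : ℝ) (hα : α ∈ Set.Ico (0:ℝ) 1)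
    (hβ : 0 < β) (hγ : 0 < γ) (hγα : γ < α / (1 - α))
    (hMα : α ≤ Mα) (hM : 0 < Mα) (hP : 0 < P)
    (B C : ℝ) (hB : B = (α + Mα + (1 - α) * (β - γ)) / 2)
    (hC : C = Mα * (α - (1 - α) * γ))
    (g : ℝ → ℝ)
    (hg : ∀ x : ℝ, g x =
      (-B * x + P / 2 +
        Real.sqrt ((B * x - P / 2) ^ 2 - C * x ^ 2 + Mα * P * x)) / Mα)
    (E : ℝ) (hE : E = (β - γ) * P / (α * (β - γ) + Mα * γ)) :
    (∀ x : ℝ, 0 ≤ x → 0 < g x + x → 0 ≤ g x →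
      ((β - γ - β * x / (g x + x)) * x = 0 ↔ x = 0 ∨ x = E)) ∧
    (0 < E ↔ 1 < β / γ) := by
  obtain ⟨hα0, hα1⟩ := hα
  have h1α : 0 < 1 - α := by linarith
  have hαγ : γ * (1 - α) < α := (lt_div_iff₀ h1α).mp hγα
  have hαpos : 0 < α := lt_trans (by positivity : (0:ℝ) < γ * (1 - α)) hαγ
  have hCpos : 0 < C := by rw [hC]; nlinarith
  have hDpos : 0 < α * (β - γ) + Mα * γ := by nlinarith
  -- Q is nonnegative whenever g x ≥ 0
  have hQnn : ∀ x : ℝ, 0 ≤ x → 0 ≤ g x →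
      0 ≤ (B * x - P / 2) ^ 2 - C * x ^ 2 + Mα * P * x := by
    intro x hx hgx
    by_contra hQ
    push_neg at hQ
    have hs0 : Real.sqrt ((B * x - P / 2) ^ 2 - C * x ^ 2 + Mα * P * x) = 0 :=
      Real.sqrt_eq_zero_of_nonpos hQ.le
    rw [hg x, hs0] at hgx
    have hBP : 0 ≤ -B * x + P / 2 := by
      rcases div_nonneg_iff.mp hgx with ⟨h1, _⟩ | ⟨_, h2⟩
      · linarith
      · linarith
    have hCx : C * x ^ 2 = 2 * Mα * B * x ^ 2 - Mα * (Mα + (1 - α) * β) * x ^ 2 := by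
      rw [hB, hC]; ring
    have hK : 0 ≤ Mα * (Mα + (1 - α) * β) * x ^ 2 := by
      have h1 : 0 ≤ Mα + (1 - α) * β := by nlinarith
      have := sq_nonneg x
      positivity
    have hprod : 0 ≤ Mα * (x * (-B * x + P / 2)) :=
      mul_nonneg hM.le (mul_nonneg hx hBP)
    nlinarith [sq_nonneg (B * x - P / 2), hCx, hK, hprod]
  constructor
  · intro x hx hgxx hgx
    constructor
    · intro h
      rcases mul_eq_zero.mp h with h0 | h0
      · by_cases hx0 : x = 0
        · exact Or.inl hx0
        · right
          have hxpos : 0 < x := lt_of_le_of_ne hx (Ne.symm hx0)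
          have hdpos : 0 < β - γ := by
            have hh : β - γ = β * x / (g x + x) := by linarith
            rw [hh]; positivity
          have hfe : (β - γ) * (g x + x) = β * x := by
            have h1 : β - γ = β * x / (g x + x) := by linarith
            field_simp at h1
            linarith
          have hgval : (β - γ) * g x = γ * x := by linear_combination hfe
          have hgx' := hg x
          set Qx := (B * x - P / 2) ^ 2 - C * x ^ 2 + Mα * P * x with hQx
          have hQ0 : 0 ≤ Qx := hQnn x hx hgx
          set s := Real.sqrt Qx with hsdef
          have hs2 : s ^ 2 = Qx := Real.sq_sqrt hQ0
          have hMg : Mα * g x = -B * x + P / 2 + s := by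
            rw [hgx']; field_simp
          have hds : (β - γ) * s
              = Mα * γ * x + (β - γ) * B * x - (β - γ) * P / 2 := by
            linear_combination Mα * hgval - (β - γ) * hMg
          have hsq : (Mα * γ * x + (β - γ) * B * x - (β - γ) * P / 2) ^ 2
              = (β - γ) ^ 2 * Qx := by
            have h1 : ((β - γ) * s) ^ 2 = (β - γ) ^ 2 * Qx := by
              rw [mul_pow, hs2]
            rw [← hds]; exact h1
          rw [hQx, hB, hC] at hsq
          have hkey : Mα * β * x * ((α * (β - γ) + Mα * γ) * x - P * (β - γ)) = 0 := by
            linear_combination hsq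
          have hne : Mα * β * x ≠ 0 := by positivity
          have hDx : (α * (β - γ) + Mα * γ) * x - P * (β - γ) = 0 := by
            rcases mul_eq_zero.mp hkey with hh | hh
            · exact absurd hh hne
            · exact hh
          rw [hE, eq_div_iff hDpos.ne']
          linarith
      · exact Or.inl h0
    · intro h
      rcases h with h0 | hxe
      · rw [h0]; ring
      · by_cases hd : 0 < β - γ
        · have hDx : (α * (β - γ) + Mα * γ) * x = P * (β - γ) := by
            rw [hxe, hE]; field_simp
          have hnum : 0 ≤ Mα * γ * x + (β - γ) * B * x - (β - γ) * P / 2 := by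
            rw [hB]
            nlinarith [hDx, mul_nonneg (mul_nonneg hM.le hβ.le) hx,
              mul_nonneg (mul_nonneg h1α.le (mul_pos hd hd).le) hx]
          have hSnn : 0 ≤ (Mα * γ * x + (β - γ) * B * x - (β - γ) * P / 2) / (β - γ) :=
            div_nonneg hnum hd.le
          have hQS : (B * x - P / 2) ^ 2 - C * x ^ 2 + Mα * P * x
              = ((Mα * γ * x + (β - γ) * B * x - (β - γ) * P / 2) / (β - γ)) ^ 2 := by
            rw [div_pow, eq_div_iff (pow_ne_zero 2 hd.ne'), hB, hC]
            linear_combination (-(Mα * β * x)) * hDx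
          have hsqrt : Real.sqrt ((B * x - P / 2) ^ 2 - C * x ^ 2 + Mα * P * x)
              = (Mα * γ * x + (β - γ) * B * x - (β - γ) * P / 2) / (β - γ) := by
            rw [hQS]; exact Real.sqrt_sq hSnn
          have hgE : g x = (-B * x + P / 2
              + (Mα * γ * x + (β - γ) * B * x - (β - γ) * P / 2) / (β - γ)) / Mα := by
            rw [hg x, hsqrt]
          have hfe : (β - γ) * (g x + x) = β * x := by
            rw [hgE]; field_simp; ring
          have hbr : β - γ - β * x / (g x + x) = 0 := by
            have hdiv : β * x / (g x + x) = β - γ := by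
              rw [div_eq_iff hgxx.ne']
              linarith
            linarith
          rw [hbr]; ring
        · push_neg at hd
          have hE0 : E ≤ 0 := by
            rw [hE]
            apply div_nonpos_of_nonpos_of_nonneg
            · nlinarith
            · exact hDpos.le
          have hx0 : x = 0 := le_antisymm (hxe ▸ hE0) hx
          rw [hx0]; ring
  · rw [hE]
    constructor
    · intro h
      rw [one_lt_div hγ]
      by_contra hc
      push_neg at hc
      have hle : (β - γ) * P / (α * (β - γ) + Mα * γ) ≤ 0 := by
        apply div_nonpos_of_nonpos_of_nonneg
        · nlinarith
        · exact hDpos.le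
      linarith
    · intro h
      rw [one_lt_div hγ] at h
      apply div_pos (by nlinarith) hDpos
end

section
/- With parameters α ∈ [0,1), β, γ > 0, M(α) ≥ α > 0, P > 0, and E = (β−γ)·P/(α·(β−γ)+M(α)·γ), if β > γ then 1 + g'(E) > 0, where g is the function g(x) = (−B·x + P/2 + √((B·x−P/2)² − C·x² + M(α)·P·x))/M(α), B = (α+M(α)+(1-α)(β-γ))/2, C = M(α)·(α−(1-α)γ). In fact 1 + g'(E) ≥ (1-α)·(β−γ)·(M(α)·γ + β − γ) / ((1-α)·(β−γ)² + β·M(α)). -/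
set_option maxHeartbeats 1000000 in
theorem stmt11 (α β γ Mα P : ℝ) (hα : α ∈ Set.Ico (0:ℝ) 1)
    (hαpos : 0 < α) (hγ : 0 < γ) (hβγ : γ < β)
    (hγα : γ < α / (1 - α)) (hMα : α ≤ Mα) (hP : 0 < P)
    (B C : ℝ) (hB : B = (α + Mα + (1 - α) * (β - γ)) / 2)
    (hC : C = Mα * (α - (1 - α) * γ))
    (g : ℝ → ℝ)
    (hg : ∀ x : ℝ, g x =
      (-B * x + P / 2 +
        Real.sqrt ((B * x - P / 2) ^ 2 - C * x ^ 2 + Mα * P * x)) / Mα)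
    (E : ℝ) (hE : E = (β - γ) * P / (α * (β - γ) + Mα * γ)) :
    0 < 1 + deriv g E ∧
    (1 - α) * (β - γ) * (Mα * γ + β - γ) / ((1 - α) * (β - γ) ^ 2 + β * Mα)
      ≤ 1 + deriv g E := by
  obtain ⟨hα0, hα1⟩ := hα
  have hMpos : 0 < Mα := lt_of_lt_of_le hαpos hMα
  have h1a : 0 < 1 - α := by linarith
  have hbc : 0 < β - γ := by linarith
  have hβ : 0 < β := by linarith
  have hca : γ * (1 - α) < α := (lt_div_iff₀ h1a).mp hγα
  have hD : 0 < α * (β - γ) + Mα * γ := by positivity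
  set S : ℝ := P * (Mα * β + (1 - α) * (β - γ) ^ 2) / (2 * (α * (β - γ) + Mα * γ))
    with hSdef
  have hden : 0 < Mα * β + (1 - α) * (β - γ) ^ 2 := by positivity
  have hS : 0 < S := by rw [hSdef]; positivity
  have hqE : (B * E - P / 2) ^ 2 - C * E ^ 2 + Mα * P * E = S ^ 2 := by
    rw [hB, hC, hE, hSdef]
    field_simp
    ring
  have hsqrt : Real.sqrt ((B * E - P / 2) ^ 2 - C * E ^ 2 + Mα * P * E) = S := by
    rw [hqE, Real.sqrt_sq hS.le]
  have hqne : (B * E - P / 2) ^ 2 - C * E ^ 2 + Mα * P * E ≠ 0 := by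
    rw [hqE]; positivity
  -- derivative of the radicand
  have hqd : HasDerivAt (fun x : ℝ => (B * x - P / 2) ^ 2 - C * x ^ 2 + Mα * P * x)
      (2 * B * (B * E - P / 2) - 2 * C * E + Mα * P) E := by
    have h1 := ((((hasDerivAt_id E).const_mul B).sub_const (P / 2)).pow 2)
    have h2 := (hasDerivAt_pow 2 E).const_mul C
    have h3 := (hasDerivAt_id E).const_mul (Mα * P)
    have h := (h1.sub h2).add h3
    refine h.congr_deriv ?_
    simp only [id]
    push_cast
    ring
  have hsd : HasDerivAt (fun x : ℝ =>
      Real.sqrt ((B * x - P / 2) ^ 2 - C * x ^ 2 + Mα * P * x))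
      ((2 * B * (B * E - P / 2) - 2 * C * E + Mα * P) / (2 * S)) E := by
    have := hqd.sqrt hqne
    rwa [hsqrt] at this
  have hgd : HasDerivAt g
      ((-B * 1 + (2 * B * (B * E - P / 2) - 2 * C * E + Mα * P) / (2 * S)) / Mα) E := by
    have hgfun : g = fun x : ℝ => (-B * x + P / 2 +
        Real.sqrt ((B * x - P / 2) ^ 2 - C * x ^ 2 + Mα * P * x)) / Mα := funext hg
    rw [hgfun]
    exact ((((hasDerivAt_id E).const_mul (-B)).add_const (P / 2)).add hsd).div_const Mα
  have hderiv : deriv g E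
      = (-B * 1 + (2 * B * (B * E - P / 2) - 2 * C * E + Mα * P) / (2 * S)) / Mα :=
    hgd.deriv
  have key : 1 + deriv g E
      = β * (Mα - α + (1 - α) * (β - γ)) / (Mα * β + (1 - α) * (β - γ) ^ 2) := by
    rw [hderiv, hB, hC, hE, hSdef]
    field_simp
    ring
  have hnumpos : 0 < Mα - α + (1 - α) * (β - γ) := by nlinarith
  constructor
  · rw [key]
    positivity
  · rw [key]
    rw [div_le_div_iff₀ (by positivity) (by positivity)]
    have key2 : (1 - α) * γ * (β - γ) * (Mα - 1) ≤ β * (Mα - α) := by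
      rcases le_or_gt Mα 1 with hM1 | hM1
      · have : (1 - α) * γ * (β - γ) * (Mα - 1) ≤ 0 := by
          apply mul_nonpos_of_nonneg_of_nonpos
          · positivity
          · linarith
        nlinarith
      · nlinarith [mul_lt_mul_of_pos_right hca (mul_pos hbc (sub_pos.mpr hM1)),
          mul_nonneg (mul_nonneg hαpos.le hγ.le) (sub_pos.mpr hM1).le,
          mul_nonneg (mul_nonneg hβ.le hMpos.le) h1a.le]
    nlinarith [mul_le_mul_of_nonneg_right key2 hden.le]
end

section
/- With g as in the Caputo–Fabrizio reduction (parameters α ∈ [0,1), β, γ > 0, M(α) = 1, P > 0), one has 1 + g'(0) = (1-α)·(1 − β + γ). In particular, if β ≤ γ then 1 + g'(0) > 0, and since g is convex, 1 + g'(x) > 0 for all x ≥ 0. -/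
theorem stmt12 (α β γ P : ℝ) (hα : α ∈ Set.Ico (0:ℝ) 1)
    (hβ : 0 < β) (hγ : 0 < γ) (hγα : γ < α / (1 - α)) (hP : 0 < P)
    (B C : ℝ) (hB : B = (α + 1 + (1 - α) * (β - γ)) / 2)
    (hC : C = α - (1 - α) * γ)
    (g : ℝ → ℝ)
    (hg : ∀ x : ℝ, g x =
      (-B * x + P / 2 +
        Real.sqrt ((B * x - P / 2) ^ 2 - C * x ^ 2 + P * x)) / 1)
    (hrad : ∀ x : ℝ, 0 < (B * x - P / 2) ^ 2 - C * x ^ 2 + P * x) :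
    1 + deriv g 0 = (1 - α) * (1 - β + γ) ∧
    (β ≤ γ → 0 < 1 + deriv g 0 ∧ ∀ x : ℝ, 0 ≤ x → 0 < 1 + deriv g x) := by
  obtain ⟨hα0, hα1⟩ := hα
  have hgfun : g = fun x : ℝ =>
      (-B * x + P / 2 +
        Real.sqrt ((B * x - P / 2) ^ 2 - C * x ^ 2 + P * x)) / 1 := funext hg
  subst hgfun
  have hder : ∀ x : ℝ,
      deriv (fun x : ℝ =>
        (-B * x + P / 2 +
          Real.sqrt ((B * x - P / 2) ^ 2 - C * x ^ 2 + P * x)) / 1) x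
      = -B + (2 * (B * x - P / 2) * B - C * (2 * x) + P) /
          (2 * Real.sqrt ((B * x - P / 2) ^ 2 - C * x ^ 2 + P * x)) := by
    intro x
    have hr := hrad x
    have hb : HasDerivAt (fun x : ℝ => B * x - P / 2) B x := by
      simpa using ((hasDerivAt_id x).const_mul B).sub_const (P / 2)
    have h1 : HasDerivAt (fun x : ℝ => (B * x - P / 2) ^ 2 - C * x ^ 2 + P * x)
        (2 * (B * x - P / 2) * B - C * (2 * x) + P) x := by
      have hsq : HasDerivAt (fun x : ℝ => (B * x - P / 2) ^ 2)
          (2 * (B * x - P / 2) * B) x := by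
        simpa using hb.fun_pow 2
      have hcx : HasDerivAt (fun x : ℝ => C * x ^ 2) (C * (2 * x)) x := by
        simpa using (hasDerivAt_pow 2 x).const_mul C
      have hpx : HasDerivAt (fun x : ℝ => P * x) P x := by
        simpa using (hasDerivAt_id x).const_mul P
      exact (hsq.sub hcx).add hpx
    have hs := h1.sqrt (ne_of_gt hr)
    have hlin : HasDerivAt (fun x : ℝ => -B * x + P / 2) (-B) x := by
      simpa using ((hasDerivAt_id x).const_mul (-B)).add_const (P / 2)
    have htot := (hlin.fun_add hs).div_const 1
    have := htot.deriv
    rw [this]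
    ring
  have hsqrt0 : Real.sqrt ((B * 0 - P / 2) ^ 2 - C * 0 ^ 2 + P * 0) = P / 2 := by
    have h1 : (B * 0 - P / 2) ^ 2 - C * 0 ^ 2 + P * 0 = (P / 2) ^ 2 := by ring
    rw [h1, Real.sqrt_sq (by linarith)]
  have hP0 : P ≠ 0 := ne_of_gt hP
  have haux : (1:ℝ) + deriv (fun x : ℝ =>
      (-B * x + P / 2 +
        Real.sqrt ((B * x - P / 2) ^ 2 - C * x ^ 2 + P * x)) / 1) 0
      = 2 - 2 * B := by
    rw [hder 0, hsqrt0]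
    field_simp
    ring
  constructor
  · rw [haux, hB]; ring
  · intro hβγ
    have h1B : 0 < 1 - B := by
      rw [hB]; nlinarith
    have key : ∀ x : ℝ, 0 ≤ x → 0 < 1 + deriv (fun x : ℝ =>
        (-B * x + P / 2 +
          Real.sqrt ((B * x - P / 2) ^ 2 - C * x ^ 2 + P * x)) / 1) x := by
      intro x hx
      rw [hder x]
      have hr := hrad x
      set R := (B * x - P / 2) ^ 2 - C * x ^ 2 + P * x with hR
      set s := Real.sqrt R with hsdef
      have hspos : 0 < s := Real.sqrt_pos.mpr hr
      have ht : (0:ℝ) < (1 - B) * x + P / 2 := by positivity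
      have hreq : R = ((1 - B) * x + P / 2) ^ 2 + (1 - α) * β * x ^ 2 := by
        rw [hR, hB, hC]; ring
      have hts : (1 - B) * x + P / 2 ≤ s := by
        rw [hsdef]
        apply Real.le_sqrt' ht |>.mpr
        rw [hreq]
        have : 0 ≤ (1 - α) * β * x ^ 2 :=
          mul_nonneg (mul_nonneg (by linarith) hβ.le) (sq_nonneg x)
        linarith
      have hnum : 0 < 2 * (1 - B) * s + (2 * (B * x - P / 2) * B - C * (2 * x) + P) := by
        have hr' : 2 * (B * x - P / 2) * B - C * (2 * x) + P
            = 2 * (1 - B) * ((1 - B) * x + P / 2) + 2 * ((1 - α) * β) * x := by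
          rw [hB, hC]; ring
        rw [hr']
        have h2 : 0 < (1 - B) * s := mul_pos h1B hspos
        have h3 : 0 < (1 - B) * ((1 - B) * x + P / 2) := mul_pos h1B ht
        have h4 : 0 ≤ (1 - α) * β * x :=
          mul_nonneg (mul_nonneg (by linarith) hβ.le) hx
        nlinarith
      have heq : 1 + (-B + (2 * (B * x - P / 2) * B - C * (2 * x) + P) / (2 * s))
          = (2 * (1 - B) * s + (2 * (B * x - P / 2) * B - C * (2 * x) + P)) / (2 * s) := by
        field_simp
        ring
      rw [heq]
      exact div_pos hnum (by linarith)
    exact ⟨by rw [haux]; nlinarith, key⟩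
end

section
/- Let β > γ > 0, α ∈ [0,1), M(α) > 0, P > 0, E = (β−γ)·P/(α(β−γ)+M(α)γ), and let x_R = E. Then V(x) = (x − x_R)² is a strict Lyapunov function for the ODE x' = F(x) with F(x) = (β − γ − β·x/(g(x)+x))·x on (0, ∞): that is, F(x)·V'(x) < 0 for all x > 0 with x ≠ E (where g(x) + x > 0 and g(x) ≥ 0). -/
set_option maxHeartbeats 1600000 in
theorem stmt14 (α β γ Mα P : ℝ) (hα : α ∈ Set.Ico (0:ℝ) 1)
    (hγ : 0 < γ) (hβγ : γ < β) (hγα : γ < α / (1 - α))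
    (hMα : α ≤ Mα) (hM : 0 < Mα) (hP : 0 < P)
    (B C : ℝ) (hB : B = (α + Mα + (1 - α) * (β - γ)) / 2)
    (hC : C = Mα * (α - (1 - α) * γ))
    (g : ℝ → ℝ)
    (hg : ∀ x : ℝ, g x =
      (-B * x + P / 2 +
        Real.sqrt ((B * x - P / 2) ^ 2 - C * x ^ 2 + Mα * P * x)) / Mα)
    (E : ℝ) (hE : E = (β - γ) * P / (α * (β - γ) + Mα * γ)) :
    ∀ x : ℝ, 0 < x → x ≠ E → 0 < g x + x → 0 ≤ g x →
      ((β - γ - β * x / (g x + x)) * x) * (2 * (x - E)) < 0 := by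
  obtain ⟨hα0, hα1⟩ := hα
  intro x hx hxE hgx hg0
  have hβ : 0 < β := lt_trans hγ hβγ
  have hβγ' : 0 < β - γ := by linarith
  have h1α : 0 < 1 - α := by linarith
  have hden : 0 < α * (β - γ) + Mα * γ := by
    nlinarith [mul_pos hM hγ, mul_nonneg hα0 hβγ'.le]
  have hE' : E * (α * (β - γ) + Mα * γ) = (β - γ) * P := by
    rw [hE]; field_simp
  set D := (B * x - P / 2) ^ 2 - C * x ^ 2 + Mα * P * x with hDdef
  -- D > 0 since 4(B²−C)D = (2(B²−C)x + (Mα−B)P)² + Mα(1−α)β P², with B²−C > 0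
  have h1 : B ^ 2 - C - (Mα - B) ^ 2 = Mα * (1 - α) * β := by rw [hB, hC]; ring
  have hMab : 0 < Mα * (1 - α) * β := mul_pos (mul_pos hM h1α) hβ
  have hBC : 0 < B ^ 2 - C := by nlinarith [sq_nonneg (Mα - B)]
  have hD : 0 < D := by
    have hid : 4 * (B ^ 2 - C) * D
        = (2 * (B ^ 2 - C) * x + (Mα - B) * P) ^ 2 + (B ^ 2 - C - (Mα - B) ^ 2) * P ^ 2 := by
      rw [hDdef]; ring
    nlinarith [sq_nonneg (2 * (B ^ 2 - C) * x + (Mα - B) * P), mul_pos hMab (mul_pos hP hP),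
      sq_nonneg P]
  set u := Real.sqrt D with hu
  have hu2 : u ^ 2 = D := Real.sq_sqrt hD.le
  have hupos : 0 < u := Real.sqrt_pos.mpr hD
  set G := g x with hG
  have hgu : Mα * G = -B * x + P / 2 + u := by
    rw [hG, hg x, hu, hDdef]
    field_simp
  set w := γ * Mα * x + (β - γ) * (B * x - P / 2) with hw
  have key : (β - γ) ^ 2 * u ^ 2 - w ^ 2
      = Mα * β * (E * (α * (β - γ) + Mα * γ)) * x
        - Mα * β * (α * (β - γ) + Mα * γ) * x * x := by
    rw [hu2, hDdef, hw, hE', hB, hC]; ring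
  have hsw : Mα * ((β - γ) * G - γ * x) = (β - γ) * u - w := by
    rw [hw]; linear_combination (β - γ) * hgu
  clear_value w G u D
  clear hg hγα hDdef hu hu2 hD h1 hBC hMab hgu hG hg0
  have hmain : ((β - γ) * G - γ * x) * (x - E) < 0 := by
    rcases lt_or_gt_of_ne hxE with hlt | hgt
    · -- x < E : (β−γ)²u² > w², so (β−γ)u > w, so s > 0
      have hkey : (β - γ) ^ 2 * u ^ 2 - w ^ 2 > 0 := by
        linarith [key, mul_pos (mul_pos (mul_pos (mul_pos hM hβ) hden) hx) (sub_pos.mpr hlt)]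
      have hsu : (β - γ) * u - w > 0 := by
        nlinarith [mul_pos hβγ' hupos, hkey]
      have hs : (β - γ) * G - γ * x > 0 := by nlinarith [hsw, hsu, hM]
      exact mul_neg_of_pos_of_neg hs (by linarith)
    · -- x > E : w > 0 and w² > (β−γ)²u², so s < 0
      have hBpos : 0 < B := by rw [hB]; nlinarith [mul_pos h1α hβγ']
      have hB2 : 0 < 2 * B - α := by rw [hB]; nlinarith [mul_pos h1α hβγ']
      have hcoef : 0 < γ * Mα + (β - γ) * B :=
        add_pos (mul_pos hγ hM) (mul_pos hβγ' hBpos)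
      have hq : w * (α * (β - γ) + Mα * γ)
          = (x - E) * ((γ * Mα + (β - γ) * B) * (α * (β - γ) + Mα * γ))
            + (β - γ) * P * (γ * Mα + (β - γ) * (2 * B - α)) / 2 := by
        rw [hw]; linear_combination (γ * Mα + (β - γ) * B) * hE'
      have t1 : 0 < (x - E) * ((γ * Mα + (β - γ) * B) * (α * (β - γ) + Mα * γ)) :=
        mul_pos (sub_pos.mpr hgt) (mul_pos hcoef hden)
      have t2 : 0 < (β - γ) * P * (γ * Mα + (β - γ) * (2 * B - α)) / 2 := by
        apply div_pos _ (by norm_num)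
        exact mul_pos (mul_pos hβγ' hP)
          (add_pos (mul_pos hγ hM) (mul_pos hβγ' hB2))
      have hwden : 0 < w * (α * (β - γ) + Mα * γ) := by rw [hq]; linarith
      have hwpos : 0 < w := by nlinarith [hwden, hden]
      have hkey : w ^ 2 - (β - γ) ^ 2 * u ^ 2 > 0 := by
        linarith [key, mul_pos (mul_pos (mul_pos (mul_pos hM hβ) hden) hx) (sub_pos.mpr hgt)]
      have hsu : (β - γ) * u - w < 0 := by
        nlinarith [mul_pos hβγ' hupos, hkey, hwpos]
      have hs : (β - γ) * G - γ * x < 0 := by nlinarith [hsw, hsu, hM]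
      exact mul_neg_of_neg_of_pos hs (by linarith)
  have hrw : (β - γ - β * x / (G + x)) * x * (2 * (x - E))
      = (((β - γ) * G - γ * x) * (x - E)) * (2 * x / (G + x)) := by
    field_simp
    ring
  rw [hrw]
  exact mul_neg_of_neg_of_pos hmain (div_pos (by linarith) hgx)
end

section
/- Let α ∈ (0,1], β, γ > 0, and assume 0 < β ≤ γ. Then there exists T > 0 such that for all initial data S₀, I₀ > 0 there exist continuous functions S, I : [0,T] → (0,∞) satisfying the Volterra integral equations S(t) = S₀ + (1/Γ(α₁))·∫₀ᵗ f(S(s),I(s))·(t−s)^{α₁−1} ds and I(t) = I₀ − (1/Γ(α₂))·∫₀ᵗ f(S(s),I(s))·(t−s)^{α₂−1} ds for all t ∈ [0,T], where f(x,y) = (γ − β·x/(x+y))·y and α₁, α₂ ∈ (0,1] are fixed. -/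
open MeasureTheory intervalIntegral Set
open scoped NNReal ENNReal

noncomputable def volt (a : ℝ) (g : ℝ → ℝ) (t : ℝ) : ℝ :=
  ∫ s in (0:ℝ)..t, g s * (t - s) ^ (a - 1)

lemma kernel_intble {a : ℝ} (ha : 0 < a) (c b b' : ℝ) :
    IntervalIntegrable (fun s => (c - s) ^ (a - 1)) volume b b' := by
  have h := (intervalIntegral.intervalIntegrable_rpow' (a := c - b) (b := c - b')
    (r := a - 1) (by linarith)).comp_sub_left c
  simpa using h

lemma volt_intble {a : ℝ} {g : ℝ → ℝ} (hg : Continuous g) (ha : 0 < a) (c b b' : ℝ) :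
    IntervalIntegrable (fun s => g s * (c - s) ^ (a - 1)) volume b b' :=
  (kernel_intble ha c b b').continuousOn_mul hg.continuousOn

lemma kernel_integral {a : ℝ} (ha : 0 < a) {b c' c : ℝ} (h1 : b ≤ c') (h2 : c' ≤ c) :
    ∫ s in b..c', (c - s) ^ (a - 1) = ((c - b) ^ a - (c - c') ^ a) / a := by
  rw [intervalIntegral.integral_comp_sub_left (fun x : ℝ => x ^ (a - 1)) c]
  rw [integral_rpow (Or.inl (by linarith))]
  simp only [sub_add_cancel]

lemma volt_bound {a M t : ℝ} {g : ℝ → ℝ} (hg : Continuous g) (hM : ∀ s, |g s| ≤ M)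
    (ha : 0 < a) (ht : 0 ≤ t) : |volt a g t| ≤ M * t ^ a / a := by
  have hMint : IntervalIntegrable (fun s => M * (t - s) ^ (a - 1)) volume 0 t :=
    (kernel_intble ha t 0 t).const_mul M
  have h1 : |volt a g t| ≤ ∫ s in (0:ℝ)..t, |g s * (t - s) ^ (a - 1)| :=
    intervalIntegral.abs_integral_le_integral_abs ht
  have h2 : (∫ s in (0:ℝ)..t, |g s * (t - s) ^ (a - 1)|)
      ≤ ∫ s in (0:ℝ)..t, M * (t - s) ^ (a - 1) := by
    apply intervalIntegral.integral_mono_on ht ((volt_intble hg ha t 0 t).abs) hMint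
    intro s hs
    rw [abs_mul, abs_of_nonneg (Real.rpow_nonneg (by linarith [hs.2] : (0:ℝ) ≤ t - s) _)]
    exact mul_le_mul_of_nonneg_right (hM s) (Real.rpow_nonneg (by linarith [hs.2]) _)
  have h3 : (∫ s in (0:ℝ)..t, M * (t - s) ^ (a - 1)) = M * t ^ a / a := by
    rw [intervalIntegral.integral_const_mul, kernel_integral ha ht le_rfl]
    simp [Real.zero_rpow (ne_of_gt ha)]
    ring
  linarith

lemma ae_ne_restrict (t c d : ℝ) : ∀ᵐ s ∂(volume.restrict (Set.Icc c d)), s ≠ t := by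
  refine MeasureTheory.ae_restrict_of_ae ?_
  rw [MeasureTheory.ae_iff]
  have : {s : ℝ | ¬ s ≠ t} = {t} := by ext s; simp
  rw [this]
  exact Real.volume_singleton

lemma volt_sub_bound {a M t t' : ℝ} {g : ℝ → ℝ} (hg : Continuous g) (hM : ∀ s, |g s| ≤ M)
    (ha : 0 < a) (ha1 : a ≤ 1) (ht : 0 ≤ t) (htt' : t ≤ t') :
    |volt a g t' - volt a g t| ≤ 2 * M * (t' - t) ^ a / a := by
  have hM0 : 0 ≤ M := le_trans (abs_nonneg _) (hM 0)
  have I1 : IntervalIntegrable (fun s => g s * (t - s) ^ (a-1)) volume 0 t :=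
    volt_intble hg ha t 0 t
  have I2 : IntervalIntegrable (fun s => g s * (t' - s) ^ (a-1)) volume 0 t :=
    volt_intble hg ha t' 0 t
  have I3 : IntervalIntegrable (fun s => g s * (t' - s) ^ (a-1)) volume t t' :=
    volt_intble hg ha t' t t'
  have K1 : IntervalIntegrable (fun s => (t' - s) ^ (a-1)) volume 0 t := kernel_intble ha t' 0 t
  have K2 : IntervalIntegrable (fun s => (t - s) ^ (a-1)) volume 0 t := kernel_intble ha t 0 t
  have hsplit : volt a g t' = (∫ s in (0:ℝ)..t, g s * (t'-s)^(a-1))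
      + ∫ s in t..t', g s * (t'-s)^(a-1) :=
    (intervalIntegral.integral_add_adjacent_intervals I2 I3).symm
  -- bound A
  have hAeq : (∫ s in (0:ℝ)..t, g s * (t'-s)^(a-1)) - volt a g t
      = ∫ s in (0:ℝ)..t, (g s * (t'-s)^(a-1) - g s * (t-s)^(a-1)) :=
    (intervalIntegral.integral_sub I2 I1).symm
  have hA : |(∫ s in (0:ℝ)..t, g s * (t'-s)^(a-1)) - volt a g t|
      ≤ M * (t^a - t'^a + (t'-t)^a) / a := by
    rw [hAeq]
    have habs : |∫ s in (0:ℝ)..t, (g s * (t'-s)^(a-1) - g s * (t-s)^(a-1))|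
        ≤ ∫ s in (0:ℝ)..t, |g s * (t'-s)^(a-1) - g s * (t-s)^(a-1)| :=
      intervalIntegral.abs_integral_le_integral_abs ht
    have hmono : (∫ s in (0:ℝ)..t, |g s * (t'-s)^(a-1) - g s * (t-s)^(a-1)|)
        ≤ ∫ s in (0:ℝ)..t, M * ((t-s)^(a-1) - (t'-s)^(a-1)) := by
      refine intervalIntegral.integral_mono_ae_restrict ht (I2.sub I1).abs
        ((K2.sub K1).const_mul M) ?_
      filter_upwards [ae_ne_restrict t 0 t,
        MeasureTheory.ae_restrict_mem measurableSet_Icc] with s hs1 hs2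
      have hts : 0 < t - s := lt_of_le_of_ne (by linarith [hs2.2]) (by intro h; exact hs1 (by linarith))
      have hk : (t'-s)^(a-1) ≤ (t-s)^(a-1) :=
        Real.rpow_le_rpow_of_nonpos hts (by linarith) (by linarith)
      have hk0 : (0:ℝ) ≤ (t'-s)^(a-1) := Real.rpow_nonneg (by linarith) _
      rw [← mul_sub, abs_mul, abs_sub_comm, abs_of_nonneg (by linarith : (0:ℝ) ≤ (t-s)^(a-1) - (t'-s)^(a-1))]
      exact mul_le_mul_of_nonneg_right (hM s) (by linarith)
    have hval : (∫ s in (0:ℝ)..t, M * ((t-s)^(a-1) - (t'-s)^(a-1)))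
        = M * (t^a - t'^a + (t'-t)^a) / a := by
      rw [intervalIntegral.integral_const_mul, intervalIntegral.integral_sub K2 K1,
        kernel_integral ha ht le_rfl, kernel_integral ha ht htt']
      rw [sub_zero, sub_self, sub_zero, Real.zero_rpow (ne_of_gt ha)]
      ring
    linarith
  -- bound B
  have hB : |∫ s in t..t', g s * (t'-s)^(a-1)| ≤ M * (t'-t)^a / a := by
    have habs : |∫ s in t..t', g s * (t'-s)^(a-1)| ≤ ∫ s in t..t', |g s * (t'-s)^(a-1)| :=
      intervalIntegral.abs_integral_le_integral_abs htt'
    have hmono : (∫ s in t..t', |g s * (t'-s)^(a-1)|) ≤ ∫ s in t..t', M * (t'-s)^(a-1) := by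
      refine intervalIntegral.integral_mono_on htt' I3.abs
        ((kernel_intble ha t' t t').const_mul M) ?_
      intro s hs
      rw [abs_mul, abs_of_nonneg (Real.rpow_nonneg (by linarith [hs.2] : (0:ℝ) ≤ t' - s) _)]
      exact mul_le_mul_of_nonneg_right (hM s) (Real.rpow_nonneg (by linarith [hs.2]) _)
    have hval : (∫ s in t..t', M * (t'-s)^(a-1)) = M * (t'-t)^a / a := by
      rw [intervalIntegral.integral_const_mul, kernel_integral ha htt' le_rfl]
      rw [sub_self, Real.zero_rpow (ne_of_gt ha)]
      ring
    linarith
  have hta : t ^ a ≤ t' ^ a := Real.rpow_le_rpow ht htt' ha.le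
  have key : M * (t^a - t'^a + (t'-t)^a) / a ≤ M * (t'-t)^a / a := by
    gcongr
    linarith
  have heq : volt a g t' - volt a g t
      = ((∫ s in (0:ℝ)..t, g s * (t'-s)^(a-1)) - volt a g t)
        + ∫ s in t..t', g s * (t'-s)^(a-1) := by
    rw [hsplit]; ring
  rw [heq]
  calc |_ + _| ≤ _ + _ := abs_add_le _ _
    _ ≤ M * (t'-t)^a/a + M * (t'-t)^a/a := add_le_add (le_trans hA key) hB
    _ = 2 * M * (t' - t) ^ a / a := by ring

lemma holder_cont {F : ℝ → ℝ} {C r T : ℝ} (hr : 0 < r) (hC : 0 ≤ C)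
    (h : ∀ t t', 0 ≤ t → t ≤ t' → t' ≤ T → |F t' - F t| ≤ C * (t' - t) ^ r) :
    ContinuousOn F (Set.Icc 0 T) := by
  intro t ht
  rw [Metric.continuousWithinAt_iff]
  intro ε hε
  refine ⟨(ε / (C + 1)) ^ (1 / r), Real.rpow_pos_of_pos (by positivity) _, ?_⟩
  intro x hx hdist
  have key : ∀ u v : ℝ, 0 ≤ u → u ≤ v → v ≤ T → dist v u < (ε / (C + 1)) ^ (1 / r) →
      dist (F v) (F u) < ε := by
    intro u v hu huv hv hd
    rw [Real.dist_eq, abs_of_nonneg (by linarith)] at hd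
    have h1 : (v - u) ^ r < ((ε / (C + 1)) ^ (1 / r)) ^ r :=
      Real.rpow_lt_rpow (by linarith) hd hr
    have h2 : ((ε / (C + 1)) ^ (1 / r)) ^ r = ε / (C + 1) := by
      rw [← Real.rpow_mul (by positivity : (0:ℝ) ≤ ε / (C + 1)), one_div,
        inv_mul_cancel₀ (ne_of_gt hr), Real.rpow_one]
    rw [h2] at h1
    have h5 : (v - u) ^ r * (C + 1) < ε := (lt_div_iff₀ (by positivity)).mp h1
    have h4 : C * (v - u) ^ r < ε := by
      nlinarith [Real.rpow_nonneg (by linarith : (0:ℝ) ≤ v - u) r]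
    rw [Real.dist_eq]
    exact lt_of_le_of_lt (abs_sub_comm (F v) (F u) ▸ h u v hu huv hv) h4
  rcases le_total x t with hxt | htx
  · rw [dist_comm]
    exact key x t hx.1 hxt ht.2 (by rwa [dist_comm] at hdist)
  · exact key t x ht.1 htx hx.2 hdist

lemma volt_continuousOn {a M T : ℝ} {g : ℝ → ℝ} (hg : Continuous g) (hM : ∀ s, |g s| ≤ M)
    (ha : 0 < a) (ha1 : a ≤ 1) : ContinuousOn (volt a g) (Set.Icc 0 T) := by
  have hM0 : 0 ≤ M := le_trans (abs_nonneg _) (hM 0)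
  refine holder_cont ha (by positivity : (0:ℝ) ≤ 2 * M / a) ?_
  intro t t' ht htt' _
  have := volt_sub_bound hg hM ha ha1 ht htt'
  calc |volt a g t' - volt a g t| ≤ 2 * M * (t' - t) ^ a / a := this
    _ = 2 * M / a * (t' - t) ^ a := by ring

lemma volt_diff_bound {a M t : ℝ} {g₁ g₂ : ℝ → ℝ} (h1 : Continuous g₁) (h2 : Continuous g₂)
    (hM : ∀ s, |g₁ s - g₂ s| ≤ M) (ha : 0 < a) (ht : 0 ≤ t) :
    |volt a g₁ t - volt a g₂ t| ≤ M * t ^ a / a := by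
  have hsub : volt a g₁ t - volt a g₂ t = volt a (fun s => g₁ s - g₂ s) t := by
    unfold volt
    rw [← intervalIntegral.integral_sub (volt_intble h1 ha t 0 t) (volt_intble h2 ha t 0 t)]
    congr 1; funext s; ring
  rw [hsub]
  exact volt_bound (h1.sub h2) hM ha ht

lemma volt_nonneg {a t : ℝ} {g : ℝ → ℝ} (hgpos : ∀ s, 0 ≤ g s) (ha : 0 < a) (ht : 0 ≤ t) :
    0 ≤ volt a g t := by
  refine intervalIntegral.integral_nonneg ht ?_
  intro s hs
  exact mul_nonneg (hgpos s) (Real.rpow_nonneg (by linarith [hs.2]) _)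

-- f lemmas
lemma fr_bounds {β γ x y : ℝ} (hx : 0 < x) (hy : 0 < y) (hβ : 0 < β) (hβγ : β ≤ γ) :
    0 ≤ (γ - β * x / (x + y)) * y ∧ (γ - β * x / (x + y)) * y ≤ γ * y := by
  have hxy : 0 < x + y := by linarith
  have h1 : β * x / (x + y) ≤ β := by
    rw [div_le_iff₀ hxy]; nlinarith
  have h2 : 0 ≤ β * x / (x + y) := by positivity
  constructor
  · apply mul_nonneg (by linarith) hy.le
  · nlinarith

lemma h_lip_x {x₁ x₂ y : ℝ} (h1 : 0 < x₁) (h2 : 0 < x₂) (hy : 0 < y) :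
    |x₁ * y / (x₁ + y) - x₂ * y / (x₂ + y)| ≤ |x₁ - x₂| := by
  have d1 : 0 < x₁ + y := by linarith
  have d2 : 0 < x₂ + y := by linarith
  have heq : x₁ * y / (x₁ + y) - x₂ * y / (x₂ + y) = y ^ 2 * (x₁ - x₂) / ((x₁ + y) * (x₂ + y)) := by
    field_simp; ring
  rw [heq, abs_div, abs_mul, abs_of_nonneg (by positivity : (0:ℝ) ≤ y ^ 2),
    abs_of_nonneg (by positivity : (0:ℝ) ≤ (x₁ + y) * (x₂ + y)), div_le_iff₀ (by positivity)]
  have hd : y ^ 2 ≤ (x₁ + y) * (x₂ + y) := by nlinarith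
  nlinarith [mul_le_mul_of_nonneg_left hd (abs_nonneg (x₁ - x₂))]

lemma fr_lip {β γ x₁ y₁ x₂ y₂ : ℝ} (hx₁ : 0 < x₁) (hy₁ : 0 < y₁) (hx₂ : 0 < x₂) (hy₂ : 0 < y₂)
    (hβ : 0 < β) (hβγ : β ≤ γ) :
    |(γ - β * x₁ / (x₁ + y₁)) * y₁ - (γ - β * x₂ / (x₂ + y₂)) * y₂|
      ≤ (γ + 2 * β) * max |x₁ - x₂| |y₁ - y₂| := by
  have d1 : (0:ℝ) < x₁ + y₁ := by linarith
  have d2 : (0:ℝ) < x₂ + y₂ := by linarith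
  have d3 : (0:ℝ) < x₂ + y₁ := by linarith
  have heq : (γ - β * x₁ / (x₁ + y₁)) * y₁ - (γ - β * x₂ / (x₂ + y₂)) * y₂
      = γ * (y₁ - y₂) - β * (x₁ * y₁ / (x₁ + y₁) - x₂ * y₂ / (x₂ + y₂)) := by
    field_simp; ring
  have hhx : |x₁ * y₁ / (x₁ + y₁) - x₂ * y₁ / (x₂ + y₁)| ≤ |x₁ - x₂| := h_lip_x hx₁ hx₂ hy₁
  have hhy : |x₂ * y₁ / (x₂ + y₁) - x₂ * y₂ / (x₂ + y₂)| ≤ |y₁ - y₂| := by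
    have := h_lip_x hy₁ hy₂ hx₂
    calc |x₂ * y₁ / (x₂ + y₁) - x₂ * y₂ / (x₂ + y₂)|
        = |y₁ * x₂ / (y₁ + x₂) - y₂ * x₂ / (y₂ + x₂)| := by rw [mul_comm x₂ y₁, mul_comm x₂ y₂, add_comm x₂ y₁, add_comm x₂ y₂]
      _ ≤ |y₁ - y₂| := this
  have hh : |x₁ * y₁ / (x₁ + y₁) - x₂ * y₂ / (x₂ + y₂)| ≤ |x₁ - x₂| + |y₁ - y₂| := by
    calc |x₁ * y₁ / (x₁ + y₁) - x₂ * y₂ / (x₂ + y₂)|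
        = |(x₁ * y₁ / (x₁ + y₁) - x₂ * y₁ / (x₂ + y₁)) + (x₂ * y₁ / (x₂ + y₁) - x₂ * y₂ / (x₂ + y₂))| := by ring_nf
      _ ≤ _ := abs_add_le _ _
      _ ≤ |x₁ - x₂| + |y₁ - y₂| := add_le_add hhx hhy
  have hmx : |x₁ - x₂| ≤ max |x₁ - x₂| |y₁ - y₂| := le_max_left _ _
  have hmy : |y₁ - y₂| ≤ max |x₁ - x₂| |y₁ - y₂| := le_max_right _ _
  have hγ : 0 < γ := lt_of_lt_of_le hβ hβγ
  calc |(γ - β * x₁ / (x₁ + y₁)) * y₁ - (γ - β * x₂ / (x₂ + y₂)) * y₂|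
      = |γ * (y₁ - y₂) - β * (x₁ * y₁ / (x₁ + y₁) - x₂ * y₂ / (x₂ + y₂))| := by rw [heq]
    _ ≤ |γ * (y₁ - y₂)| + |β * (x₁ * y₁ / (x₁ + y₁) - x₂ * y₂ / (x₂ + y₂))| := abs_sub _ _
    _ = γ * |y₁ - y₂| + β * |x₁ * y₁ / (x₁ + y₁) - x₂ * y₂ / (x₂ + y₂)| := by
        rw [abs_mul, abs_mul, abs_of_pos hγ, abs_of_pos hβ]
    _ ≤ γ * max |x₁ - x₂| |y₁ - y₂| + β * (|x₁ - x₂| + |y₁ - y₂|) := by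
        apply add_le_add (mul_le_mul_of_nonneg_left hmy hγ.le) (mul_le_mul_of_nonneg_left hh hβ.le)
    _ ≤ (γ + 2 * β) * max |x₁ - x₂| |y₁ - y₂| := by nlinarith

lemma arith_contr {Γa a t1 Xa γ β dd A B : ℝ} (hΓ : 0 < Γa) (ha : 0 < a)
    (ht1 : 0 ≤ t1) (hle : t1 ≤ Xa) (hβ : 0 < β) (hβγ : β ≤ γ)
    (hsm : 1 / (Γa * a) * (3 * γ) * Xa ≤ 1 / 2) (hdd : 0 ≤ dd)
    (hAB : |A - B| ≤ (γ + 2 * β) * dd * t1 / a) : 1 / Γa * |A - B| ≤ 1 / 2 * dd := by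
  have k1 : (γ + 2 * β) * dd * t1 ≤ 3 * γ * dd * Xa := by
    nlinarith [mul_nonneg (mul_nonneg (by linarith : (0:ℝ) ≤ 3 * γ - (γ + 2 * β)) hdd) ht1,
      mul_nonneg (mul_nonneg (by linarith : (0:ℝ) ≤ γ + 2 * β) hdd)
        (by linarith : (0:ℝ) ≤ Xa - t1)]
  have k2 : |A - B| ≤ 3 * γ * dd * Xa / a := le_trans hAB (by gcongr)
  have k3 := mul_le_mul_of_nonneg_left k2 (by positivity : (0:ℝ) ≤ 1 / Γa)
  have k4 : 1 / Γa * (3 * γ * dd * Xa / a) = (1 / (Γa * a) * (3 * γ) * Xa) * dd := by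
    field_simp
  have k5 := mul_le_mul_of_nonneg_right hsm hdd
  linarith

lemma arith_inv {Γa a t1 Xa γ I₀ V : ℝ} (hΓ : 0 < Γa) (ha : 0 < a)
    (ht1 : 0 ≤ t1) (hle : t1 ≤ Xa) (hγ : 0 < γ) (hI : 0 < I₀)
    (hsm : 1 / (Γa * a) * (3 * γ) * Xa ≤ 1 / 2)
    (hV : |V| ≤ γ * (3 / 2 * I₀) * t1 / a) : 1 / Γa * |V| ≤ I₀ / 2 := by
  have k1 : γ * (3 / 2 * I₀) * t1 ≤ 3 * γ * (I₀ / 2) * Xa := by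
    nlinarith [mul_le_mul_of_nonneg_left hle (by positivity : (0:ℝ) ≤ 3 / 2 * γ * I₀)]
  have k2 : |V| ≤ 3 * γ * (I₀ / 2) * Xa / a := le_trans hV (by gcongr)
  have k3 := mul_le_mul_of_nonneg_left k2 (by positivity : (0:ℝ) ≤ 1 / Γa)
  have k4 : 1 / Γa * (3 * γ * (I₀ / 2) * Xa / a) = (1 / (Γa * a) * (3 * γ) * Xa) * (I₀ / 2) := by
    field_simp
  have k5 := mul_le_mul_of_nonneg_right hsm (by positivity : (0:ℝ) ≤ I₀ / 2)
  linarith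
theorem stmt17 (α₁ α₂ β γ : ℝ)
    (hα₁ : α₁ ∈ Set.Ioc (0:ℝ) 1) (hα₂ : α₂ ∈ Set.Ioc (0:ℝ) 1)
    (hβ : 0 < β) (hβγ : β ≤ γ)
    (f : ℝ → ℝ → ℝ) (hf : ∀ x y : ℝ, f x y = (γ - β * x / (x + y)) * y) :
    ∃ T : ℝ, 0 < T ∧
      ∀ S₀ I₀ : ℝ, 0 < S₀ → 0 < I₀ →
        ∃ S I : ℝ → ℝ,
          ContinuousOn S (Set.Icc 0 T) ∧ ContinuousOn I (Set.Icc 0 T) ∧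
          (∀ t ∈ Set.Icc (0:ℝ) T, 0 < S t ∧ 0 < I t) ∧
          (∀ t ∈ Set.Icc (0:ℝ) T,
            S t = S₀ + (1 / Real.Gamma α₁) *
              ∫ s in (0:ℝ)..t, f (S s) (I s) * (t - s) ^ (α₁ - 1)) ∧
          (∀ t ∈ Set.Icc (0:ℝ) T,
            I t = I₀ - (1 / Real.Gamma α₂) *
              ∫ s in (0:ℝ)..t, f (S s) (I s) * (t - s) ^ (α₂ - 1)) := by
  obtain ⟨ha₁, ha₁'⟩ := hα₁
  obtain ⟨ha₂, ha₂'⟩ := hα₂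
  have hγ : 0 < γ := lt_of_lt_of_le hβ hβγ
  have hΓ₁ : 0 < Real.Gamma α₁ := Real.Gamma_pos_of_pos ha₁
  have hΓ₂ : 0 < Real.Gamma α₂ := Real.Gamma_pos_of_pos ha₂
  -- choose T
  obtain ⟨T, hT0, hs₁, hs₂⟩ : ∃ T : ℝ, 0 < T ∧
      1 / (Real.Gamma α₁ * α₁) * (3 * γ) * T ^ α₁ ≤ 1 / 2 ∧
      1 / (Real.Gamma α₂ * α₂) * (3 * γ) * T ^ α₂ ≤ 1 / 2 := by
    set C₁ := 1 / (Real.Gamma α₁ * α₁) with hC₁def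
    set C₂ := 1 / (Real.Gamma α₂ * α₂) with hC₂def
    have hC₁0 : 0 < C₁ := by rw [hC₁def]; positivity
    have hC₂0 : 0 < C₂ := by rw [hC₂def]; positivity
    set D := (C₁ + C₂) * (3 * γ) + 1 with hDdef
    have hD1 : 1 ≤ D := by nlinarith
    have hD0 : 0 < D := by linarith
    set m := min α₁ α₂ with hmdef
    have hm0 : 0 < m := lt_min ha₁ ha₂
    set ε := min 1 (1 / (2 * D)) with hεdef
    have hε0 : 0 < ε := lt_min one_pos (by positivity)
    have hε1 : ε ≤ 1 := min_le_left _ _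
    refine ⟨ε ^ (1 / m), Real.rpow_pos_of_pos hε0 _, ?_, ?_⟩ <;>
    · set T := ε ^ (1 / m) with hTdef
      have hT0 : 0 < T := Real.rpow_pos_of_pos hε0 _
      have hTpow : ∀ a : ℝ, m ≤ a → T ^ a ≤ 1 / (2 * D) := by
        intro a hma
        have h1 : T ^ a = ε ^ (1 / m * a) := by
          rw [hTdef, ← Real.rpow_mul hε0.le]
        have h2 : (1:ℝ) ≤ 1 / m * a := by
          rw [one_div, inv_mul_eq_div, le_div_iff₀ hm0, one_mul]; exact hma
        calc T ^ a = ε ^ (1 / m * a) := h1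
          _ ≤ ε ^ (1:ℝ) := Real.rpow_le_rpow_of_exponent_ge hε0 hε1 h2
          _ = ε := Real.rpow_one ε
          _ ≤ 1 / (2 * D) := min_le_right _ _
      have hsmall : ∀ C a : ℝ, 0 < C → C * (3 * γ) ≤ D → m ≤ a →
          C * (3 * γ) * T ^ a ≤ 1 / 2 := by
        intro C a hC hCD hma
        have h1 : T ^ a ≤ 1 / (2 * D) := hTpow a hma
        have h2 : (0:ℝ) ≤ T ^ a := Real.rpow_nonneg hT0.le a
        have h3 : C * (3 * γ) * T ^ a ≤ D * (1 / (2 * D)) := by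
          calc C * (3 * γ) * T ^ a ≤ D * T ^ a := mul_le_mul_of_nonneg_right hCD h2
            _ ≤ D * (1 / (2 * D)) := mul_le_mul_of_nonneg_left h1 hD0.le
        have h4 : D * (1 / (2 * D)) = 1 / 2 := by field_simp
        linarith
      first
        | exact hsmall C₁ α₁ hC₁0 (by nlinarith) (min_le_left _ _)
        | exact hsmall C₂ α₂ hC₂0 (by nlinarith) (min_le_right _ _)
  have hTle : (0:ℝ) ≤ T := hT0.le
  refine ⟨T, hT0, ?_⟩
  intro S₀ I₀ hS₀ hI₀
  classical
  -- clamped functions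
  let cl1 : ℝ → ℝ := fun x => max x S₀
  let cl2 : ℝ → ℝ := fun y => max (min y (3 / 2 * I₀)) (I₀ / 2)
  have hcl1_pos : ∀ x, S₀ ≤ cl1 x := fun x => le_max_right _ _
  have hcl2_lb : ∀ y, I₀ / 2 ≤ cl2 y := fun y => le_max_right _ _
  have hcl2_ub : ∀ y, cl2 y ≤ 3 / 2 * I₀ := by
    intro y
    apply max_le (min_le_right _ _) (by linarith)
  have hcl1_lip : ∀ x y, |cl1 x - cl1 y| ≤ |x - y| := fun x y => abs_max_sub_max_le_abs x y S₀
  have hcl2_lip : ∀ x y, |cl2 x - cl2 y| ≤ |x - y| := by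
    intro x y
    calc |cl2 x - cl2 y| ≤ |min x (3 / 2 * I₀) - min y (3 / 2 * I₀)| :=
          abs_max_sub_max_le_abs _ _ _
      _ ≤ max |x - y| |3 / 2 * I₀ - 3 / 2 * I₀| := abs_min_sub_min_le_max _ _ _ _
      _ = |x - y| := by simp
  have hcl1_cont : Continuous cl1 := continuous_id.max continuous_const
  have hcl2_cont : Continuous cl2 := (continuous_id.min continuous_const).max continuous_const
  have hcl1_id : ∀ x, S₀ ≤ x → cl1 x = x := fun x hx => max_eq_left hx
  have hcl2_id : ∀ y, |y - I₀| ≤ I₀ / 2 → cl2 y = y := by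
    intro y hy
    rw [abs_le] at hy
    have h1 : min y (3 / 2 * I₀) = y := min_eq_left (by linarith [hy.2])
    rw [show cl2 y = max (min y (3 / 2 * I₀)) (I₀ / 2) from rfl, h1]
    exact max_eq_left (by linarith [hy.1])
  -- the space
  let ext : C(Set.Icc (0:ℝ) T, ℝ) → ℝ → ℝ := fun u s => u (Set.projIcc 0 T hTle s)
  have hext_cont : ∀ u, Continuous (ext u) := fun u => u.continuous.comp continuous_projIcc
  have hext_eq : ∀ (u : C(Set.Icc (0:ℝ) T, ℝ)) (t : ℝ) (ht : t ∈ Set.Icc (0:ℝ) T),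
      ext u t = u ⟨t, ht⟩ := by
    intro u t ht
    show u (Set.projIcc 0 T hTle t) = u ⟨t, ht⟩
    rw [Set.projIcc_of_mem hTle ht]
  let g : C(Set.Icc (0:ℝ) T, ℝ) × C(Set.Icc (0:ℝ) T, ℝ) → ℝ → ℝ := fun p s =>
    (γ - β * cl1 (ext p.1 s) / (cl1 (ext p.1 s) + cl2 (ext p.2 s))) * cl2 (ext p.2 s)
  have hne : ∀ p : C(Set.Icc (0:ℝ) T, ℝ) × C(Set.Icc (0:ℝ) T, ℝ), ∀ s : ℝ, cl1 (ext p.1 s) + cl2 (ext p.2 s) ≠ 0 := by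
    intro p s
    have h1 := hcl1_pos (ext p.1 s)
    have h2 := hcl2_lb (ext p.2 s)
    intro h
    nlinarith
  have hgcont : ∀ p : C(Set.Icc (0:ℝ) T, ℝ) × C(Set.Icc (0:ℝ) T, ℝ), Continuous (g p) := by
    intro p
    have hu : Continuous fun s => cl1 (ext p.1 s) := hcl1_cont.comp (hext_cont p.1)
    have hv : Continuous fun s => cl2 (ext p.2 s) := hcl2_cont.comp (hext_cont p.2)
    exact ((continuous_const.sub ((continuous_const.mul hu).div (hu.add hv) (hne p))).mul hv)
  have hgpos : ∀ p : C(Set.Icc (0:ℝ) T, ℝ) × C(Set.Icc (0:ℝ) T, ℝ), ∀ s : ℝ, 0 ≤ g p s := by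
    intro p s
    have h1 := hcl1_pos (ext p.1 s)
    have h2 := hcl2_lb (ext p.2 s)
    exact (fr_bounds (by linarith) (by linarith) hβ hβγ).1
  have hgbd : ∀ p : C(Set.Icc (0:ℝ) T, ℝ) × C(Set.Icc (0:ℝ) T, ℝ), ∀ s : ℝ, |g p s| ≤ γ * (3 / 2 * I₀) := by
    intro p s
    have h1 := hcl1_pos (ext p.1 s)
    have h2 := hcl2_lb (ext p.2 s)
    have h3 := hcl2_ub (ext p.2 s)
    have hb := fr_bounds (x := cl1 (ext p.1 s)) (y := cl2 (ext p.2 s))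
      (by linarith) (by linarith) hβ hβγ
    rw [abs_of_nonneg hb.1]
    calc g p s ≤ γ * cl2 (ext p.2 s) := hb.2
      _ ≤ γ * (3 / 2 * I₀) := mul_le_mul_of_nonneg_left h3 hγ.le
  -- Lipschitz estimate for g
  have hglip : ∀ p q : C(Set.Icc (0:ℝ) T, ℝ) × C(Set.Icc (0:ℝ) T, ℝ), ∀ s : ℝ, |g p s - g q s| ≤ (γ + 2 * β) * dist p q := by
    intro p q s
    have h1 := hcl1_pos (ext p.1 s)
    have h2 := hcl2_lb (ext p.2 s)
    have h1' := hcl1_pos (ext q.1 s)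
    have h2' := hcl2_lb (ext q.2 s)
    have hlip := fr_lip (x₁ := cl1 (ext p.1 s)) (y₁ := cl2 (ext p.2 s))
      (x₂ := cl1 (ext q.1 s)) (y₂ := cl2 (ext q.2 s))
      (by linarith) (by linarith) (by linarith) (by linarith) hβ hβγ
    have hx : |cl1 (ext p.1 s) - cl1 (ext q.1 s)| ≤ dist p q := by
      calc |cl1 (ext p.1 s) - cl1 (ext q.1 s)| ≤ |ext p.1 s - ext q.1 s| := hcl1_lip _ _
        _ = dist (p.1 (Set.projIcc 0 T hTle s)) (q.1 (Set.projIcc 0 T hTle s)) :=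
            (Real.dist_eq _ _).symm
        _ ≤ dist p.1 q.1 := ContinuousMap.dist_apply_le_dist _
        _ ≤ dist p q := by rw [Prod.dist_eq]; exact le_max_left _ _
    have hy : |cl2 (ext p.2 s) - cl2 (ext q.2 s)| ≤ dist p q := by
      calc |cl2 (ext p.2 s) - cl2 (ext q.2 s)| ≤ |ext p.2 s - ext q.2 s| := hcl2_lip _ _
        _ = dist (p.2 (Set.projIcc 0 T hTle s)) (q.2 (Set.projIcc 0 T hTle s)) :=
            (Real.dist_eq _ _).symm
        _ ≤ dist p.2 q.2 := ContinuousMap.dist_apply_le_dist _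
        _ ≤ dist p q := by rw [Prod.dist_eq]; exact le_max_right _ _
    calc |g p s - g q s|
        ≤ (γ + 2 * β) * max |cl1 (ext p.1 s) - cl1 (ext q.1 s)|
            |cl2 (ext p.2 s) - cl2 (ext q.2 s)| := hlip
      _ ≤ (γ + 2 * β) * dist p q := mul_le_mul_of_nonneg_left (max_le hx hy) (by linarith)
  -- the map
  have hcontS : ∀ p : C(Set.Icc (0:ℝ) T, ℝ) × C(Set.Icc (0:ℝ) T, ℝ), ContinuousOn (fun t => S₀ + 1 / Real.Gamma α₁ * volt α₁ (g p) t)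
      (Set.Icc (0:ℝ) T) :=
    fun p => continuousOn_const.add (continuousOn_const.mul
      (volt_continuousOn (hgcont p) (hgbd p) ha₁ ha₁'))
  have hcontI : ∀ p : C(Set.Icc (0:ℝ) T, ℝ) × C(Set.Icc (0:ℝ) T, ℝ), ContinuousOn (fun t => I₀ - 1 / Real.Gamma α₂ * volt α₂ (g p) t)
      (Set.Icc (0:ℝ) T) :=
    fun p => continuousOn_const.sub (continuousOn_const.mul
      (volt_continuousOn (hgcont p) (hgbd p) ha₂ ha₂'))
  let Φ : C(Set.Icc (0:ℝ) T, ℝ) × C(Set.Icc (0:ℝ) T, ℝ) →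
      C(Set.Icc (0:ℝ) T, ℝ) × C(Set.Icc (0:ℝ) T, ℝ) := fun p =>
    (⟨(Set.Icc (0:ℝ) T).restrict (fun t => S₀ + 1 / Real.Gamma α₁ * volt α₁ (g p) t),
        (hcontS p).restrict⟩,
     ⟨(Set.Icc (0:ℝ) T).restrict (fun t => I₀ - 1 / Real.Gamma α₂ * volt α₂ (g p) t),
        (hcontI p).restrict⟩)
  have hΦ1 : ∀ p : C(Set.Icc (0:ℝ) T, ℝ) × C(Set.Icc (0:ℝ) T, ℝ), ∀ τ : Set.Icc (0:ℝ) T,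
      (Φ p).1 τ = S₀ + 1 / Real.Gamma α₁ * volt α₁ (g p) τ.1 := fun p τ => rfl
  have hΦ2 : ∀ p : C(Set.Icc (0:ℝ) T, ℝ) × C(Set.Icc (0:ℝ) T, ℝ), ∀ τ : Set.Icc (0:ℝ) T,
      (Φ p).2 τ = I₀ - 1 / Real.Gamma α₂ * volt α₂ (g p) τ.1 := fun p τ => rfl
  -- contraction
  have hcontract : ContractingWith (1/2 : ℝ≥0) Φ := by
    constructor
    · show (1/2 : ℝ≥0) < 1
      rw [← NNReal.coe_lt_coe]
      norm_num
    · refine LipschitzWith.of_dist_le_mul ?_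
      intro p q
      have hhalf : ((1/2 : ℝ≥0) : ℝ) = 1/2 := by norm_num
      rw [hhalf, Prod.dist_eq]
      have hd0 : (0:ℝ) ≤ dist p q := dist_nonneg
      apply max_le
      · rw [ContinuousMap.dist_le (mul_nonneg (by norm_num) hd0)]
        intro τ
        rw [hΦ1 p τ, hΦ1 q τ, Real.dist_eq]
        have he : S₀ + 1 / Real.Gamma α₁ * volt α₁ (g p) τ.1
            - (S₀ + 1 / Real.Gamma α₁ * volt α₁ (g q) τ.1)
            = 1 / Real.Gamma α₁ * (volt α₁ (g p) τ.1 - volt α₁ (g q) τ.1) := by ring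
        rw [he, abs_mul, abs_of_pos (by positivity : (0:ℝ) < 1 / Real.Gamma α₁)]
        exact arith_contr hΓ₁ ha₁ (Real.rpow_nonneg τ.2.1 α₁)
          (Real.rpow_le_rpow τ.2.1 τ.2.2 ha₁.le) hβ hβγ hs₁ hd0
          (volt_diff_bound (hgcont p) (hgcont q) (hglip p q) ha₁ τ.2.1)
      · rw [ContinuousMap.dist_le (mul_nonneg (by norm_num) hd0)]
        intro τ
        rw [hΦ2 p τ, hΦ2 q τ, Real.dist_eq]
        have he : I₀ - 1 / Real.Gamma α₂ * volt α₂ (g p) τ.1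
            - (I₀ - 1 / Real.Gamma α₂ * volt α₂ (g q) τ.1)
            = 1 / Real.Gamma α₂ * (volt α₂ (g q) τ.1 - volt α₂ (g p) τ.1) := by ring
        rw [he, abs_mul, abs_of_pos (by positivity : (0:ℝ) < 1 / Real.Gamma α₂), abs_sub_comm]
        exact arith_contr hΓ₂ ha₂ (Real.rpow_nonneg τ.2.1 α₂)
          (Real.rpow_le_rpow τ.2.1 τ.2.2 ha₂.le) hβ hβγ hs₂ hd0
          (volt_diff_bound (hgcont p) (hgcont q) (hglip p q) ha₂ τ.2.1)
  obtain ⟨w, hw⟩ : ∃ w, Φ w = w :=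
    ⟨ContractingWith.fixedPoint Φ hcontract, hcontract.fixedPoint_isFixedPt⟩
  have hwS : ∀ τ : Set.Icc (0:ℝ) T, w.1 τ = S₀ + 1 / Real.Gamma α₁ * volt α₁ (g w) τ.1 := by
    intro τ
    conv_lhs => rw [← hw]
    exact hΦ1 w τ
  have hwI : ∀ τ : Set.Icc (0:ℝ) T, w.2 τ = I₀ - 1 / Real.Gamma α₂ * volt α₂ (g w) τ.1 := by
    intro τ
    conv_lhs => rw [← hw]
    exact hΦ2 w τ
  -- bounds on the fixed point
  have hwSlb : ∀ τ : Set.Icc (0:ℝ) T, S₀ ≤ w.1 τ := by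
    intro τ
    rw [hwS τ]
    have h1 := volt_nonneg (hgpos w) ha₁ τ.2.1
    have h2 : (0:ℝ) ≤ 1 / Real.Gamma α₁ := by positivity
    nlinarith
  have hwIbd : ∀ τ : Set.Icc (0:ℝ) T, |w.2 τ - I₀| ≤ I₀ / 2 := by
    intro τ
    rw [hwI τ]
    have he : I₀ - 1 / Real.Gamma α₂ * volt α₂ (g w) τ.1 - I₀
        = -(1 / Real.Gamma α₂ * volt α₂ (g w) τ.1) := by ring
    rw [he, abs_neg, abs_mul, abs_of_pos (by positivity : (0:ℝ) < 1 / Real.Gamma α₂)]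
    exact arith_inv hΓ₂ ha₂ (Real.rpow_nonneg τ.2.1 α₂)
      (Real.rpow_le_rpow τ.2.1 τ.2.2 ha₂.le) hγ hI₀ hs₂
      (volt_bound (hgcont w) (hgbd w) ha₂ τ.2.1)
  -- clamps are the identity on the fixed point
  have hgw : g w = fun s => f (ext w.1 s) (ext w.2 s) := by
    funext s
    show (γ - β * cl1 (ext w.1 s) / (cl1 (ext w.1 s) + cl2 (ext w.2 s))) * cl2 (ext w.2 s) = _
    rw [hcl1_id _ (hwSlb _), hcl2_id _ (hwIbd _), hf]
  refine ⟨ext w.1, ext w.2, (hext_cont w.1).continuousOn, (hext_cont w.2).continuousOn,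
    ?_, ?_, ?_⟩
  · intro t ht
    rw [hext_eq w.1 t ht, hext_eq w.2 t ht]
    have h1 := hwSlb ⟨t, ht⟩
    have h2 := hwIbd ⟨t, ht⟩
    rw [abs_le] at h2
    exact ⟨by linarith, by linarith [h2.1]⟩
  · intro t ht
    rw [hext_eq w.1 t ht, hwS ⟨t, ht⟩]
    have hv : volt α₁ (g w) t = ∫ s in (0:ℝ)..t, f (ext w.1 s) (ext w.2 s) * (t - s) ^ (α₁ - 1) := by
      rw [hgw]; rfl
    rw [hv]
  · intro t ht
    rw [hext_eq w.2 t ht, hwI ⟨t, ht⟩]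
    have hv : volt α₂ (g w) t = ∫ s in (0:ℝ)..t, f (ext w.1 s) (ext w.2 s) * (t - s) ^ (α₂ - 1) := by
      rw [hgw]; rfl
    rw [hv]
end
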